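/- Every nested involution w in S_n has steady-state time at most 1; that is, BB^1(w) is in steady state. -/

import Mathlib

open scoped Classical

/-- A box-ball system configuration with `n` balls: each of `1,...,n` appears exactly once,
and every entry is either a ball (a value in `1..n`) or an empty box `e = n+1`. -/
def IsBBSConfig (n : ℕ) (X : ℤ → ℕ) : Prop :=
  (∀ k : ℕ, 1 ≤ k → k ≤ n → ∃! j : ℤ, X j = k) ∧
  ∀ j : ℤ, X j = n + 1 ∨ (1 ≤ X j ∧ X j ≤ n)

/-- The position of ball `k` in the configuration `X`. -/
noncomputable def pos (X : ℤ → ℕ) (k : ℕ) : ℤ :=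
  Classical.epsilon fun j => X j = k

/-- The nearest empty box strictly to the right of position `p`. -/
noncomputable def jumpTarget (n : ℕ) (X : ℤ → ℕ) (p : ℤ) : ℤ :=
  Classical.epsilon fun q => p < q ∧ X q = n + 1 ∧ ∀ r : ℤ, p < r → X r = n + 1 → q ≤ r

/-- Ball `k` jumps to the nearest empty box to its right. -/
noncomputable def moveBall (n k : ℕ) (X : ℤ → ℕ) : ℤ → ℕ := fun j =>
  if j = jumpTarget n X (pos X k) then k
  else if j = pos X k then n + 1
  else X j

/-- One box-ball move: the balls `1,...,n` jump, in increasing order of label. -/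
noncomputable def BBMove (n : ℕ) (X : ℤ → ℕ) : ℤ → ℕ :=
  (List.range n).foldl (fun Y k => moveBall n (k + 1) Y) X

/-- The result of applying `t` box-ball moves to `X`. -/
noncomputable def BB (n t : ℕ) (X : ℤ → ℕ) : ℤ → ℕ := (BBMove n)^[t] X

/-- The configuration of a permutation `w`: the one-line notation of `w` (with values `1..n`)
is placed in boxes `1,...,n`, and all other boxes are empty. -/
def configOfPerm (n : ℕ) (w : Equiv.Perm (Fin n)) : ℤ → ℕ := fun j =>
  if h : 1 ≤ j ∧ j ≤ (n : ℤ) then ((w ⟨j.toNat - 1, by omega⟩ : Fin n) : ℕ) + 1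
  else n + 1

/-- `[a,b]` is a maximal contiguous increasing nonempty run of balls in `X`. -/
def IsRun (n : ℕ) (X : ℤ → ℕ) (a b : ℤ) : Prop :=
  a ≤ b ∧ (∀ j : ℤ, a ≤ j → j ≤ b → 1 ≤ X j ∧ X j ≤ n) ∧
  (∀ j : ℤ, a ≤ j → j < b → X j < X (j + 1)) ∧
  X a < X (a - 1) ∧ (X (b + 1) = n + 1 ∨ X (b + 1) < X b)

/-- The run `[a,b]` of `X` is a soliton: it is preserved (as a run, with the same ball values
in the same order) by all subsequent box-ball moves. -/
def IsSoliton (n : ℕ) (X : ℤ → ℕ) (a b : ℤ) : Prop :=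
  IsRun n X a b ∧ ∀ t : ℕ, ∃ a' : ℤ,
    IsRun n (BB n t X) a' (a' + (b - a)) ∧
    ∀ i : ℤ, 0 ≤ i → i ≤ b - a → BB n t X (a' + i) = X (a + i)

/-- A configuration is in steady state when every ball is contained in a soliton. -/
def SteadyState (n : ℕ) (X : ℤ → ℕ) : Prop :=
  ∀ j : ℤ, 1 ≤ X j → X j ≤ n → ∃ a b : ℤ, a ≤ j ∧ j ≤ b ∧ IsSoliton n X a b

/-- The steady-state time of a permutation: the minimal number of box-ball moves needed
for its configuration to reach steady state. -/
noncomputable def SST (n : ℕ) (w : Equiv.Perm (Fin n)) : ℕ :=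
  sInf {t : ℕ | SteadyState n (BB n t (configOfPerm n w))}

/-- The list of positions of the balls of `X`, from left to right. -/
noncomputable def ballPosList (n : ℕ) (X : ℤ → ℕ) : List ℤ :=
  ((Finset.Icc 1 n).image (pos X)).sort (· ≤ ·)

/-- Split a (left-to-right) list of ball positions into maximal blocks of contiguous positions
carrying increasing values: the increasing runs, from leftmost to rightmost. -/
def splitRuns (X : ℤ → ℕ) : List ℤ → List (List ℤ)
  | [] => []
  | [p] => [[p]]
  | p :: q :: ps =>
    match splitRuns X (q :: ps) with
    | [] => [[p]]
    | r :: rest =>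
      if p + 1 = q ∧ X p < X q then (p :: r) :: rest else [p] :: r :: rest

/-- The increasing run decomposition of `X`: the list of its increasing runs (as lists of ball
values), the first row being the rightmost run, the second row the next run to the left, etc. -/
noncomputable def ID (n : ℕ) (X : ℤ → ℕ) : List (List ℕ) :=
  ((splitRuns X (ballPosList n X)).map fun r => r.map X).reverse

/-- The soliton decomposition of a permutation: the increasing run decomposition of its
configuration once it has reached steady state (first row = rightmost soliton). -/
noncomputable def SD (n : ℕ) (w : Equiv.Perm (Fin n)) : List (List ℕ) :=
  ID n (BB n (SST n w) (configOfPerm n w))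

/-- Schensted row insertion of `x` into a row: returns the new row and the bumped entry. -/
def rowInsert (x : ℕ) : List ℕ → List ℕ × Option ℕ
  | [] => ([x], none)
  | y :: ys =>
    if x < y then (x :: ys, some y)
    else
      let p := rowInsert x ys
      (y :: p.1, p.2)

/-- Robinson--Schensted insertion of `x` into a tableau (a list of rows). -/
def insertT : List (List ℕ) → ℕ → List (List ℕ)
  | [], x => [[x]]
  | r :: rest, x =>
    match rowInsert x r with
    | (r', none) => r' :: rest
    | (r', some y) => r' :: insertT rest y

/-- The index of the first row where the second tableau is longer than the first:
the row where a new cell was added. -/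
def growRow : List (List ℕ) → List (List ℕ) → ℕ
  | [], _ => 0
  | _ :: _, [] => 0
  | p :: ps, q :: qs => if p.length < q.length then 0 else growRow ps qs + 1

def addToRow : List (List ℕ) → ℕ → ℕ → List (List ℕ)
  | [], _, i => [[i]]
  | q :: qs, 0, i => (q ++ [i]) :: qs
  | q :: qs, r + 1, i => q :: addToRow qs r i

/-- The pair of Robinson--Schensted tableaux `(P, Q)` of a word. -/
def RSpair (l : List ℕ) : List (List ℕ) × List (List ℕ) :=
  (l.zipIdx.map Prod.swap).foldl
    (fun PQ ix =>
      let P' := insertT PQ.1 ix.2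
      (P', addToRow PQ.2 (growRow PQ.1 P') (ix.1 + 1)))
    ([], [])

/-- The Robinson--Schensted insertion tableau `P(w)` of a word. -/
def RSP (l : List ℕ) : List (List ℕ) := (RSpair l).1

/-- The Robinson--Schensted recording tableau `Q(w)` of a word. -/
def RSQ (l : List ℕ) : List (List ℕ) := (RSpair l).2

/-- The one-line notation of a permutation of `Fin n`, as a word with values in `1..n`. -/
def wordOf (n : ℕ) (w : Equiv.Perm (Fin n)) : List ℕ :=
  List.ofFn fun i => (w i : ℕ) + 1

/-- `T` is a standard Young tableau of size `n` (as a list of rows): rows are nonempty and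
weakly decreasing in length, rows and columns strictly increase, and the entries are
exactly `1,...,n`. -/
def IsStandardTableau (n : ℕ) (T : List (List ℕ)) : Prop :=
  (∀ r ∈ T, r ≠ []) ∧
  (∀ r ∈ T, r.Chain' (· < ·)) ∧
  T.Chain' (fun r r' => r'.length ≤ r.length ∧
    ∀ k : ℕ, k < r'.length → r.getD k 0 < r'.getD k 0) ∧
  List.Perm T.flatten (List.range' 1 n)

/-- The column reading word of a tableau: columns are read bottom to top, left to right. -/
def columnWord (T : List (List ℕ)) : List ℕ :=
  (List.range (T.headD []).length).flatMap fun k => (T.filterMap fun r => r[k]?).reverse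

/-- The concatenation of the columns of a tableau, each read top to bottom, left to right. -/
def colsTopDown (T : List (List ℕ)) : List ℕ :=
  (List.range (T.headD []).length).flatMap fun k => T.filterMap fun r => r[k]?

/-- `T` is the column superstandard tableau of its shape: the standard tableau obtained by
filling the columns top to bottom, from left to right, with `1,2,...,n` in order. -/
def IsColumnSuperstandard (n : ℕ) (T : List (List ℕ)) : Prop :=
  IsStandardTableau n T ∧ colsTopDown T = List.range' 1 n

/-- The length of a longest increasing subsequence of a word. -/
noncomputable def incrLen (l : List ℕ) : ℕ :=
  ((l.sublists.filter fun s => decide (s.Chain' (· < ·))).map List.length).foldr max 0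

/-- The number of descents of a word. -/
def desNum (l : List ℕ) : ℕ :=
  ((l.zip l.tail).filter fun p => decide (p.2 < p.1)).length

/-- A noncrossing involution: no pair of its 2-cycles can be written as `(a c)`, `(b d)`
with `a < b < c < d`. -/
def Noncrossing {n : ℕ} (w : Equiv.Perm (Fin n)) : Prop :=
  ¬ ∃ a b c d : Fin n, a < b ∧ b < c ∧ c < d ∧ w a = c ∧ w b = d

/-- A nested involution: every pair of its distinct 2-cycles is a nesting, i.e. can be
written as `(a d)`, `(b c)` with `a < b < c < d`. -/
def Nested {n : ℕ} (w : Equiv.Perm (Fin n)) : Prop :=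
  ∀ a b c d : Fin n, a < c → b < d → w a = c → w b = d → a ≠ b →
    (a < b ∧ d < c) ∨ (b < a ∧ c < d)

/-- `X` and `Y` differ by a dual Knuth relation of the first kind: `X` has the ball values
`k+1, k, k+2` in this relative left-to-right order, and `Y` is obtained from `X` by swapping
the balls `k+1` and `k+2`. -/
def DK1 (n : ℕ) (X Y : ℤ → ℕ) : Prop :=
  ∃ (k : ℕ) (p q r : ℤ), 1 ≤ k ∧ k + 2 ≤ n ∧ p < q ∧ q < r ∧
    X p = k + 1 ∧ X q = k ∧ X r = k + 2 ∧
    Y p = k + 2 ∧ Y r = k + 1 ∧ ∀ j : ℤ, j ≠ p → j ≠ r → Y j = X j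

/-- `X` and `Y` differ by a dual Knuth relation of the second kind: `X` has the ball values
`k, k+2, k+1` in this relative left-to-right order, and `Y` is obtained from `X` by swapping
the balls `k` and `k+1`. -/
def DK2 (n : ℕ) (X Y : ℤ → ℕ) : Prop :=
  ∃ (k : ℕ) (p q r : ℤ), 1 ≤ k ∧ k + 2 ≤ n ∧ p < q ∧ q < r ∧
    X p = k ∧ X q = k + 2 ∧ X r = k + 1 ∧
    Y p = k + 1 ∧ Y r = k ∧ ∀ j : ℤ, j ≠ p → j ≠ r → Y j = X j

/-- `X` and `Y` differ by a dual Knuth relation (of the first or second kind). -/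
def DualKnuth (n : ℕ) (X Y : ℤ → ℕ) : Prop :=
  DK1 n X Y ∨ DK1 n Y X ∨ DK2 n X Y ∨ DK2 n Y X

namespace NestedBBS

noncomputable def cfgOf (n : ℕ) (p : ℕ → ℤ) : ℤ → ℕ := fun j =>
  if h : ∃ v, (1 ≤ v ∧ v ≤ n) ∧ p v = j then h.choose else n + 1

def InjOn1n (n : ℕ) (p : ℕ → ℤ) : Prop :=
  ∀ u v, 1 ≤ u → u ≤ n → 1 ≤ v → v ≤ n → p u = p v → u = v

theorem cfgOf_eq {n : ℕ} {p : ℕ → ℤ} {v : ℕ} {j : ℤ} (hinj : InjOn1n n p)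
    (hv1 : 1 ≤ v) (hv2 : v ≤ n) (hp : p v = j) : cfgOf n p j = v := by
  have hex : ∃ u, (1 ≤ u ∧ u ≤ n) ∧ p u = j := ⟨v, ⟨hv1, hv2⟩, hp⟩
  simp only [cfgOf, dif_pos hex]
  obtain ⟨⟨h1, h2⟩, h3⟩ := hex.choose_spec
  exact hinj _ _ h1 h2 hv1 hv2 (h3.trans hp.symm)

theorem cfgOf_empty {n : ℕ} {p : ℕ → ℤ} {j : ℤ}
    (h : ∀ v, 1 ≤ v → v ≤ n → p v ≠ j) : cfgOf n p j = n + 1 := by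
  apply dif_neg
  rintro ⟨v, ⟨h1, h2⟩, h3⟩
  exact h v h1 h2 h3

theorem cfgOf_spec {n : ℕ} {p : ℕ → ℤ} {j : ℤ} (hne : cfgOf n p j ≠ n + 1) :
    (1 ≤ cfgOf n p j ∧ cfgOf n p j ≤ n) ∧ p (cfgOf n p j) = j := by
  by_cases hex : ∃ v, (1 ≤ v ∧ v ≤ n) ∧ p v = j
  · simp only [cfgOf, dif_pos hex]
    exact hex.choose_spec
  · exact absurd (dif_neg hex) hne

theorem epsilon_eq {p : ℤ → Prop} {a : ℤ} (h : p a) (hu : ∀ b, p b → b = a) :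
    Classical.epsilon p = a :=
  hu _ (Classical.epsilon_spec ⟨a, h⟩)

theorem pos_eq {X : ℤ → ℕ} {k : ℕ} {p : ℤ} (h : X p = k) (hu : ∀ j, X j = k → j = p) :
    pos X k = p := epsilon_eq h hu

theorem jumpTarget_eq {n : ℕ} {X : ℤ → ℕ} {p q : ℤ} (h1 : p < q) (h2 : X q = n + 1)
    (h3 : ∀ r, p < r → X r = n + 1 → q ≤ r) : jumpTarget n X p = q := by
  apply epsilon_eq ⟨h1, h2, h3⟩
  rintro b ⟨hb1, hb2, hb3⟩
  exact le_antisymm (hb3 q h1 h2) (h3 b hb1 hb2)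

theorem moveBall_eq {n k : ℕ} {X : ℤ → ℕ} {p q : ℤ} (hp : X p = k)
    (hu : ∀ j, X j = k → j = p) (h1 : p < q) (h2 : X q = n + 1)
    (h3 : ∀ r, p < r → X r = n + 1 → q ≤ r) :
    moveBall n k X = fun j => if j = q then k else if j = p then n + 1 else X j := by
  unfold moveBall
  rw [pos_eq hp hu, jumpTarget_eq h1 h2 h3]

theorem bbmove_foldl {n : ℕ} (F : ℕ → ℤ → ℕ)
    (hstep : ∀ k, k < n → moveBall n (k + 1) (F k) = F (k + 1)) :
    BBMove n (F 0) = F n := by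
  suffices h : ∀ m, m ≤ n →
      (List.range m).foldl (fun Y k => moveBall n (k + 1) Y) (F 0) = F m by
    exact h n le_rfl
  intro m hm
  induction m with
  | zero => simp
  | succ m ih =>
    rw [List.range_succ, List.foldl_append, ih (by omega)]
    simpa using hstep m (by omega)


structure ND (n : ℕ) (W : ℕ → ℕ) : Prop where
  mem : ∀ v, 1 ≤ v → v ≤ n → 1 ≤ W v ∧ W v ≤ n
  invol : ∀ v, 1 ≤ v → v ≤ n → W (W v) = v
  nest : ∀ u v, 1 ≤ u → u ≤ n → 1 ≤ v → v ≤ n → u < W u → v < W v → u < v → W v < W u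

def Rset (n : ℕ) (W : ℕ → ℕ) : Finset ℕ :=
  (Finset.Icc 1 n).filter fun v => ¬ W v < v ∧ ¬ (2 ≤ v ∧ v - 1 < W (v - 1))

def rho (n : ℕ) (W : ℕ → ℕ) (v : ℕ) : ℕ := ((Rset n W).filter fun u => u ≤ v).card

def Lrun (n : ℕ) (W : ℕ → ℕ) : ℕ := (Rset n W).card

/-- position of ball `v` at time `t` -/
noncomputable def gpos (n : ℕ) (W : ℕ → ℕ) (t v : ℕ) : ℤ :=
  if t = 0 then (W v : ℤ)
  else if W v < v then ((W v + t : ℕ) : ℤ)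
  else if 2 ≤ v ∧ v - 1 < W (v - 1) then ((W (v - 1) + (t - 1) : ℕ) : ℤ)
  else ((n + (t - 1) * Lrun n W + rho n W v : ℕ) : ℤ)

section
variable {n : ℕ} {W : ℕ → ℕ}

theorem ND.winj (h : ND n W) {u v : ℕ} (hu1 : 1 ≤ u) (hu2 : u ≤ n) (hv1 : 1 ≤ v)
    (hv2 : v ≤ n) (he : W u = W v) : u = v := by
  have h1 := h.invol u hu1 hu2
  have h2 := h.invol v hv1 hv2
  rw [he] at h1; omega

/-- every "a" is less than every "d" -/
theorem ND.nest' (h : ND n W) {u v : ℕ} (hu1 : 1 ≤ u) (hu2 : u ≤ n) (hv1 : 1 ≤ v)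
    (hv2 : v ≤ n) (ha : u < W u) (hb : v < W v) : u < W v := by
  rcases lt_trichotomy u v with hlt | rfl | hgt
  · omega
  · omega
  · have := h.nest v u hv1 hv2 hu1 hu2 hb ha hgt
    omega

theorem mem_Rset_iff {v : ℕ} : v ∈ Rset n W ↔
    (1 ≤ v ∧ v ≤ n) ∧ ¬ W v < v ∧ ¬ (2 ≤ v ∧ v - 1 < W (v - 1)) := by
  simp [Rset, Finset.mem_filter, Finset.mem_Icc]

theorem one_mem_Rset (h : ND n W) (hn : 1 ≤ n) : 1 ∈ Rset n W := by
  rw [mem_Rset_iff]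
  have := h.mem 1 le_rfl hn
  omega

theorem Lrun_pos (h : ND n W) (hn : 1 ≤ n) : 1 ≤ Lrun n W :=
  Finset.card_pos.2 ⟨1, one_mem_Rset h hn⟩

theorem rho_le_L (v : ℕ) : rho n W v ≤ Lrun n W :=
  Finset.card_le_card (Finset.filter_subset _ _)

theorem rho_pos {v : ℕ} (hv : v ∈ Rset n W) : 1 ≤ rho n W v :=
  Finset.card_pos.2 ⟨v, Finset.mem_filter.2 ⟨hv, le_rfl⟩⟩

theorem rho_mono {u v : ℕ} (huv : u ≤ v) : rho n W u ≤ rho n W v :=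
  Finset.card_le_card (Finset.monotone_filter_right _ fun x _ hx => le_trans hx huv)

theorem rho_lt {u v : ℕ} (hu : u ∈ Rset n W) (hv : v ∈ Rset n W) (huv : u < v) :
    rho n W u < rho n W v := by
  apply Finset.card_lt_card
  constructor
  · exact Finset.monotone_filter_right _ fun x _ hx => le_trans hx (le_of_lt huv)
  · intro hsub
    have : v ∈ (Rset n W).filter fun x => x ≤ u :=
      hsub (Finset.mem_filter.2 ⟨hv, le_rfl⟩)
    have := (Finset.mem_filter.1 this).2
    omega

theorem lt_of_rho_lt {u v : ℕ} (hu : u ∈ Rset n W) (hv : v ∈ Rset n W)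
    (hr : rho n W u < rho n W v) : u < v := by
  by_contra hc
  have : rho n W v ≤ rho n W u := rho_mono (by omega)
  omega

theorem rho_injR {u v : ℕ} (hu : u ∈ Rset n W) (hv : v ∈ Rset n W)
    (hr : rho n W u = rho n W v) : u = v := by
  rcases lt_trichotomy u v with hlt | he | hgt
  · have := rho_lt hu hv hlt; omega
  · exact he
  · have := rho_lt hv hu hgt; omega

theorem rho_surj {r : ℕ} (hr1 : 1 ≤ r) (hr2 : r ≤ Lrun n W) :
    ∃ u ∈ Rset n W, rho n W u = r := by
  have key := Finset.surj_on_of_inj_on_of_card_le (s := Rset n W) (t := Finset.Icc 1 (Lrun n W))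
    (fun a _ => rho n W a)
    (fun a ha => Finset.mem_Icc.2 ⟨rho_pos ha, rho_le_L a⟩)
    (fun a b ha hb he => rho_injR ha hb he)
    (by rw [Nat.card_Icc, Lrun]; omega)
  obtain ⟨a, ha, he⟩ := key r (Finset.mem_Icc.2 ⟨hr1, hr2⟩)
  exact ⟨a, ha, he.symm⟩

theorem rho_one (h : ND n W) (hn : 1 ≤ n) : rho n W 1 = 1 := by
  have : (Rset n W).filter (fun u => u ≤ 1) = {1} := by
    ext x
    simp only [Finset.mem_filter, Finset.mem_singleton]
    constructor
    · rintro ⟨hx, hx1⟩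
      have := (mem_Rset_iff.1 hx).1
      omega
    · rintro rfl
      exact ⟨one_mem_Rset h hn, le_rfl⟩
  rw [rho, this, Finset.card_singleton]

theorem eq_one_of_rho_eq_one (h : ND n W) {u : ℕ} (hu : u ∈ Rset n W)
    (hr : rho n W u = 1) : u = 1 := by
  have hn : 1 ≤ n := by have := (mem_Rset_iff.1 hu).1; omega
  exact rho_injR hu (one_mem_Rset h hn) (by rw [hr, rho_one h hn])

theorem mem_Rset_of_not (h : ND n W) {v : ℕ} (hv1 : 1 ≤ v) (hv2 : v ≤ n)
    (h1 : ¬ W v < v) (h2 : ¬ (2 ≤ v ∧ v - 1 < W (v - 1))) : v ∈ Rset n W :=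
  mem_Rset_iff.2 ⟨⟨hv1, hv2⟩, h1, h2⟩

theorem gpos_zero (v : ℕ) : gpos n W 0 v = (W v : ℤ) := if_pos rfl

theorem gpos_T1 {t v : ℕ} (ht : t ≠ 0) (h1 : W v < v) :
    gpos n W t v = ((W v + t : ℕ) : ℤ) := by
  rw [gpos, if_neg ht, if_pos h1]

theorem gpos_T2 {t v : ℕ} (ht : t ≠ 0) (h1 : ¬ W v < v) (h2 : 2 ≤ v ∧ v - 1 < W (v - 1)) :
    gpos n W t v = ((W (v - 1) + (t - 1) : ℕ) : ℤ) := by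
  rw [gpos, if_neg ht, if_neg h1, if_pos h2]

theorem gpos_T3 {t v : ℕ} (ht : t ≠ 0) (h1 : ¬ W v < v) (h2 : ¬ (2 ≤ v ∧ v - 1 < W (v - 1))) :
    gpos n W t v = ((n + (t - 1) * Lrun n W + rho n W v : ℕ) : ℤ) := by
  rw [gpos, if_neg ht, if_neg h1, if_neg h2]


theorem g_inj (h : ND n W) (t : ℕ) : InjOn1n n (gpos n W t) := by
  intro u v hu1 hu2 hv1 hv2 he
  rcases Nat.eq_zero_or_pos t with rfl | htp
  · rw [gpos_zero, gpos_zero] at he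
    exact h.winj hu1 hu2 hv1 hv2 (by exact_mod_cast he)
  have ht : t ≠ 0 := by omega
  obtain ⟨s, rfl⟩ : ∃ s, t = s + 1 := ⟨t - 1, by omega⟩
  have hn : 1 ≤ n := by omega
  have hL : 1 ≤ Lrun n W := Lrun_pos h hn
  set K := s * Lrun n W with hKdef
  have hK : s ≤ K := by
    rw [hKdef]; exact Nat.le_mul_of_pos_right s (by omega)
  have ht' : s + 1 ≠ 0 := ht
  by_cases hU1 : W u < u
  · by_cases hV1 : W v < v
    · rw [gpos_T1 ht hU1, gpos_T1 ht hV1] at he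
      have he' : W u + (s+1) = W v + (s+1) := by exact_mod_cast he
      exact h.winj hu1 hu2 hv1 hv2 (by omega)
    · by_cases hV2 : 2 ≤ v ∧ v - 1 < W (v - 1)
      · rw [gpos_T1 ht hU1, gpos_T2 ht hV1 hV2] at he
        have he' : W (v - 1) = W u + 1 := by
          have : W u + (s + 1) = W (v - 1) + s := by exact_mod_cast he
          omega
        have haA : W u < W (W u) := by rw [h.invol u hu1 hu2]; exact hU1
        have ham := h.mem u hu1 hu2
        have hbm : 1 ≤ v - 1 ∧ v - 1 ≤ n := by omega
        rcases lt_trichotomy (v - 1) (W u) with hc | hc | hc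
        · have := h.nest _ _ hbm.1 hbm.2 ham.1 ham.2 hV2.2 haA hc
          rw [h.invol u hu1 hu2] at this; omega
        · have h1 : W (W u) = u := h.invol u hu1 hu2
          rw [hc] at he'
          omega
        · have := h.nest _ _ ham.1 ham.2 hbm.1 hbm.2 haA hV2.2 hc
          omega
      · rw [gpos_T1 ht hU1, gpos_T3 ht hV1 hV2] at he
        have hρ : 1 ≤ rho n W v := rho_pos (mem_Rset_of_not h hv1 hv2 hV1 hV2)
        have he' : W u + (s + 1) = n + K + rho n W v := by exact_mod_cast he
        omega
  · by_cases hV1 : W v < v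
    · by_cases hU2 : 2 ≤ u ∧ u - 1 < W (u - 1)
      · rw [gpos_T2 ht hU1 hU2, gpos_T1 ht hV1] at he
        have he' : W (u - 1) = W v + 1 := by
          have : W (u - 1) + s = W v + (s + 1) := by exact_mod_cast he
          omega
        have haA : W v < W (W v) := by rw [h.invol v hv1 hv2]; exact hV1
        have ham := h.mem v hv1 hv2
        have hbm : 1 ≤ u - 1 ∧ u - 1 ≤ n := by omega
        rcases lt_trichotomy (u - 1) (W v) with hc | hc | hc
        · have := h.nest _ _ hbm.1 hbm.2 ham.1 ham.2 hU2.2 haA hc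
          rw [h.invol v hv1 hv2] at this; omega
        · have h1 : W (W v) = v := h.invol v hv1 hv2
          rw [hc] at he'
          omega
        · have := h.nest _ _ ham.1 ham.2 hbm.1 hbm.2 haA hU2.2 hc
          omega
      · rw [gpos_T3 ht hU1 hU2, gpos_T1 ht hV1] at he
        have hρ : 1 ≤ rho n W u := rho_pos (mem_Rset_of_not h hu1 hu2 hU1 hU2)
        have he' : n + K + rho n W u = W v + (s + 1) := by exact_mod_cast he
        omega
    · by_cases hU2 : 2 ≤ u ∧ u - 1 < W (u - 1)
      · by_cases hV2 : 2 ≤ v ∧ v - 1 < W (v - 1)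
        · rw [gpos_T2 ht hU1 hU2, gpos_T2 ht hV1 hV2] at he
          have he' : W (u - 1) + s = W (v - 1) + s := by exact_mod_cast he
          have := h.winj (u := u - 1) (v := v - 1) (by omega) (by omega) (by omega)
            (by omega) (by omega)
          omega
        · rw [gpos_T2 ht hU1 hU2, gpos_T3 ht hV1 hV2] at he
          have hd := h.mem (u - 1) (by omega) (by omega)
          have hρ : 1 ≤ rho n W v := rho_pos (mem_Rset_of_not h hv1 hv2 hV1 hV2)
          have he' : W (u - 1) + s = n + K + rho n W v := by exact_mod_cast he
          omega
      · by_cases hV2 : 2 ≤ v ∧ v - 1 < W (v - 1)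
        · rw [gpos_T3 ht hU1 hU2, gpos_T2 ht hV1 hV2] at he
          have hd := h.mem (v - 1) (by omega) (by omega)
          have hρ : 1 ≤ rho n W u := rho_pos (mem_Rset_of_not h hu1 hu2 hU1 hU2)
          have he' : n + K + rho n W u = W (v - 1) + s := by exact_mod_cast he
          omega
        · rw [gpos_T3 ht hU1 hU2, gpos_T3 ht hV1 hV2] at he
          have he' : n + K + rho n W u = n + K + rho n W v := by exact_mod_cast he
          exact rho_injR (mem_Rset_of_not h hu1 hu2 hU1 hU2)
            (mem_Rset_of_not h hv1 hv2 hV1 hV2) (by omega)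


theorem g_lt (h : ND n W) {t v : ℕ} (hv1 : 1 ≤ v) (hv2 : v ≤ n) :
    gpos n W t v < gpos n W (t + 1) v := by
  have hn : 1 ≤ n := by omega
  have hL : 1 ≤ Lrun n W := Lrun_pos h hn
  rcases Nat.eq_zero_or_pos t with rfl | htp
  · rw [gpos_zero]
    simp only [Nat.zero_add]
    by_cases hV1 : W v < v
    · rw [gpos_T1 one_ne_zero hV1]
      push_cast; omega
    · by_cases hV2 : 2 ≤ v ∧ v - 1 < W (v - 1)
      · rw [gpos_T2 one_ne_zero hV1 hV2]
        have hd : W (W (v-1)) = v - 1 := h.invol (v-1) (by omega) (by omega)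
        have key : W v < W (v - 1) := by
          rcases Nat.lt_or_ge v (W v) with hA | hB
          · have := h.nest (v-1) v (by omega) (by omega) hv1 hv2 hV2.2 hA (by omega)
            omega
          · -- W v = v (fixed)
            have hfix : W v = v := by omega
            have hge : v ≤ W (v - 1) := by omega
            rcases Nat.eq_or_lt_of_le hge with he | hlt
            · exfalso
              rw [← he] at hd
              omega
            · omega
        have key2 : (W v : ℤ) < ((W (v - 1) + (1 - 1) : ℕ) : ℤ) := by
          exact_mod_cast (by omega : W v < W (v - 1) + (1 - 1))
        exact key2
      · rw [gpos_T3 one_ne_zero hV1 hV2]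
        have hρ : 1 ≤ rho n W v := rho_pos (mem_Rset_of_not h hv1 hv2 hV1 hV2)
        have hwv := h.mem v hv1 hv2
        push_cast; omega
  · have ht : t ≠ 0 := by omega
    have ht1 : t + 1 ≠ 0 := by omega
    obtain ⟨s, rfl⟩ : ∃ s, t = s + 1 := ⟨t - 1, by omega⟩
    have hmul : (s + 1) * Lrun n W = s * Lrun n W + Lrun n W := Nat.succ_mul _ _
    by_cases hV1 : W v < v
    · rw [gpos_T1 ht hV1, gpos_T1 ht1 hV1]; push_cast; omega
    · by_cases hV2 : 2 ≤ v ∧ v - 1 < W (v - 1)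
      · rw [gpos_T2 ht hV1 hV2, gpos_T2 ht1 hV1 hV2]; push_cast; omega
      · rw [gpos_T3 ht hV1 hV2, gpos_T3 ht1 hV1 hV2]
        have key : (n + (s + 1 - 1) * Lrun n W + rho n W v : ℕ)
            < (n + (s + 1 + 1 - 1) * Lrun n W + rho n W v : ℕ) := by
          have e1 : s + 1 - 1 = s := rfl
          have e2 : s + 1 + 1 - 1 = s + 1 := rfl
          rw [e1, e2, hmul]
          omega
        exact_mod_cast key

theorem g_nc (h : ND n W) {t u v : ℕ} (hu1 : 1 ≤ u) (hu2 : u ≤ n) (hv1 : 1 ≤ v)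
    (hv2 : v ≤ n) (hvu : v < u) : gpos n W (t + 1) v ≠ gpos n W t u := by
  intro he
  have hn : 1 ≤ n := by omega
  have hL : 1 ≤ Lrun n W := Lrun_pos h hn
  rcases Nat.eq_zero_or_pos t with rfl | htp
  · -- t = 0 : g 1 v = W u
    rw [gpos_zero] at he
    simp only [Nat.zero_add] at he
    by_cases hV1 : W v < v
    · rw [gpos_T1 one_ne_zero hV1] at he
      have he' : W u = W v + 1 := by
        have : ((W v + 1 : ℕ) : ℤ) = (W u : ℤ) := he
        exact_mod_cast this.symm
      -- x := W v + 1 = W u, u = W x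
      have hxm : 1 ≤ W u ∧ W u ≤ n := h.mem u hu1 hu2
      have hux : W (W u) = u := h.invol u hu1 hu2
      have haA : W v < W (W v) := by rw [h.invol v hv1 hv2]; exact hV1
      have ham := h.mem v hv1 hv2
      rcases lt_trichotomy (W (W u)) (W u) with hc | hc | hc
      · -- x ∈ D : u = W x < x = W v + 1 so u ≤ W v < v
        omega
      · omega
      · -- x ∈ A : nest (W v) x gives W x < W (W v) = v
        have := h.nest (W v) (W u) ham.1 ham.2 hxm.1 hxm.2 haA hc (by omega)
        rw [h.invol v hv1 hv2] at this
        omega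
    · by_cases hV2 : 2 ≤ v ∧ v - 1 < W (v - 1)
      · rw [gpos_T2 one_ne_zero hV1 hV2] at he
        have he' : W (v - 1) = W u := by
          have : ((W (v-1) + 0 : ℕ) : ℤ) = (W u : ℤ) := he
          exact_mod_cast this
        have := h.winj (u := v - 1) (v := u) (by omega) (by omega) hu1 hu2 he'
        omega
      · rw [gpos_T3 one_ne_zero hV1 hV2] at he
        have hρ : 1 ≤ rho n W v := rho_pos (mem_Rset_of_not h hv1 hv2 hV1 hV2)
        have hwu := h.mem u hu1 hu2
        have he' : (n + (1 - 1) * Lrun n W + rho n W v : ℕ) = W u := by exact_mod_cast he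
        omega
  · have ht : t ≠ 0 := by omega
    have ht1 : t + 1 ≠ 0 := by omega
    obtain ⟨s, rfl⟩ : ∃ s, t = s + 1 := ⟨t - 1, by omega⟩
    set K := s * Lrun n W with hKdef
    have hK : s ≤ K := by rw [hKdef]; exact Nat.le_mul_of_pos_right s (by omega)
    have hmul : (s + 1) * Lrun n W = K + Lrun n W := Nat.succ_mul _ _
    by_cases hV1 : W v < v
    · by_cases hU1 : W u < u
      · rw [gpos_T1 ht1 hV1, gpos_T1 ht hU1] at he
        have he' : W u = W v + 1 := by
          have : (W v + (s + 1 + 1) : ℕ) = (W u + (s + 1) : ℕ) := by exact_mod_cast he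
          omega
        have haA : W v < W (W v) := by rw [h.invol v hv1 hv2]; exact hV1
        have hbA : W u < W (W u) := by rw [h.invol u hu1 hu2]; exact hU1
        have ham := h.mem v hv1 hv2
        have hbm := h.mem u hu1 hu2
        have := h.nest (W v) (W u) ham.1 ham.2 hbm.1 hbm.2 haA hbA (by omega)
        rw [h.invol v hv1 hv2, h.invol u hu1 hu2] at this
        omega
      · by_cases hU2 : 2 ≤ u ∧ u - 1 < W (u - 1)
        · rw [gpos_T1 ht1 hV1, gpos_T2 ht hU1 hU2] at he
          have he' : W (u - 1) = W v + 2 := by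
            have : (W v + (s + 1 + 1) : ℕ) = (W (u - 1) + s : ℕ) := by exact_mod_cast he
            omega
          have haA : W v < W (W v) := by rw [h.invol v hv1 hv2]; exact hV1
          have ham := h.mem v hv1 hv2
          have hbm : 1 ≤ u - 1 ∧ u - 1 ≤ n := by omega
          have hWa : W (W v) = v := h.invol v hv1 hv2
          rcases lt_trichotomy (u - 1) (W v) with hc | hc | hc
          · have := h.nest _ _ hbm.1 hbm.2 ham.1 ham.2 hU2.2 haA hc
            omega
          · rw [hc] at he'
            omega
          · have := h.nest _ _ ham.1 ham.2 hbm.1 hbm.2 haA hU2.2 hc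
            omega
        · rw [gpos_T1 ht1 hV1, gpos_T3 ht hU1 hU2] at he
          have huR := mem_Rset_of_not h hu1 hu2 hU1 hU2
          have hρ : 1 ≤ rho n W u := rho_pos huR
          have he' : (W v + (s + 1 + 1) : ℕ) = n + K + rho n W u := by exact_mod_cast he
          have hr1 : rho n W u = 1 := by omega
          have := eq_one_of_rho_eq_one h huR hr1
          omega
    · by_cases hV2 : 2 ≤ v ∧ v - 1 < W (v - 1)
      · by_cases hU1 : W u < u
        · rw [gpos_T2 ht1 hV1 hV2, gpos_T1 ht hU1] at he
          have he' : W (v - 1) = W u := by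
            have : (W (v-1) + (s + 1) : ℕ) = (W u + (s+1) : ℕ) := by exact_mod_cast he
            omega
          have := h.winj (u := v - 1) (v := u) (by omega) (by omega) hu1 hu2 he'
          omega
        · by_cases hU2 : 2 ≤ u ∧ u - 1 < W (u - 1)
          · rw [gpos_T2 ht1 hV1 hV2, gpos_T2 ht hU1 hU2] at he
            have he' : W (u - 1) = W (v - 1) + 1 := by
              have : (W (v-1) + (s+1) : ℕ) = (W (u-1) + s : ℕ) := by exact_mod_cast he
              omega
            have hbm : 1 ≤ u - 1 ∧ u - 1 ≤ n := by omega
            have ham : 1 ≤ v - 1 ∧ v - 1 ≤ n := by omega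
            rcases lt_trichotomy (v - 1) (u - 1) with hc | hc | hc
            · have := h.nest _ _ ham.1 ham.2 hbm.1 hbm.2 hV2.2 hU2.2 hc
              omega
            · omega
            · omega
          · rw [gpos_T2 ht1 hV1 hV2, gpos_T3 ht hU1 hU2] at he
            have huR := mem_Rset_of_not h hu1 hu2 hU1 hU2
            have hρ : 1 ≤ rho n W u := rho_pos huR
            have hd := h.mem (v-1) (by omega) (by omega)
            have he' : (W (v-1) + (s + 1) : ℕ) = n + K + rho n W u := by exact_mod_cast he
            have hr1 : rho n W u = 1 := by omega
            have := eq_one_of_rho_eq_one h huR hr1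
            omega
      · by_cases hU1 : W u < u
        · rw [gpos_T3 ht1 hV1 hV2, gpos_T1 ht hU1] at he
          have he' : (n + (s+1) * Lrun n W + rho n W v : ℕ) = W u + (s+1) := by
            exact_mod_cast he
          rw [hmul] at he'
          have hρ : 1 ≤ rho n W v := rho_pos (mem_Rset_of_not h hv1 hv2 hV1 hV2)
          omega
        · by_cases hU2 : 2 ≤ u ∧ u - 1 < W (u - 1)
          · rw [gpos_T3 ht1 hV1 hV2, gpos_T2 ht hU1 hU2] at he
            have he' : (n + (s+1) * Lrun n W + rho n W v : ℕ) = W (u-1) + s := by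
              exact_mod_cast he
            rw [hmul] at he'
            have hρ : 1 ≤ rho n W v := rho_pos (mem_Rset_of_not h hv1 hv2 hV1 hV2)
            have hd := h.mem (u-1) (by omega) (by omega)
            omega
          · rw [gpos_T3 ht1 hV1 hV2, gpos_T3 ht hU1 hU2] at he
            have he' : (n + (s+1) * Lrun n W + rho n W v : ℕ) = n + K + rho n W u := by
              exact_mod_cast he
            rw [hmul] at he'
            have hρ : 1 ≤ rho n W v := rho_pos (mem_Rset_of_not h hv1 hv2 hV1 hV2)
            have hρu : rho n W u ≤ Lrun n W := rho_le_L u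
            omega


theorem g_mid (h : ND n W) {t v : ℕ} (hv1 : 1 ≤ v) (hv2 : v ≤ n) {j : ℤ}
    (hj1 : gpos n W t v < j) (hj2 : j < gpos n W (t + 1) v) :
    ∃ u, (1 ≤ u ∧ u ≤ n) ∧
      ((u < v ∧ gpos n W (t + 1) u = j) ∨ (v < u ∧ gpos n W t u = j)) := by
  have hn : 1 ≤ n := by omega
  have hL : 1 ≤ Lrun n W := Lrun_pos h hn
  rcases Nat.eq_zero_or_pos t with rfl | htp
  · simp only [Nat.zero_add] at hj2 ⊢
    rw [gpos_zero] at hj1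
    by_cases hV1 : W v < v
    · rw [gpos_T1 one_ne_zero hV1] at hj2
      exfalso
      have : ((W v + 1 : ℕ) : ℤ) = (W v : ℤ) + 1 := by push_cast; ring
      omega
    · have hWvge : v ≤ W v := by omega
      have hwm := h.mem v hv1 hv2
      -- j is a genuine position in (W v, target), in particular 1 ≤ j
      have hj0 : 0 ≤ j := by
        have : (0 : ℤ) ≤ (W v : ℤ) := by positivity
        omega
      set jn := j.toNat with hjndef
      have hjn : (jn : ℤ) = j := Int.toNat_of_nonneg hj0
      have hjnlb : W v < jn := by omega
      by_cases hV2 : 2 ≤ v ∧ v - 1 < W (v - 1)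
      · -- v = a + 1 : middle of (W v, W (v-1)) is all unmoved, occupant W jn > v
        rw [gpos_T2 one_ne_zero hV1 hV2] at hj2
        have hjnub : jn < W (v - 1) := by
          have : ((W (v-1) + (1-1) : ℕ) : ℤ) = (W (v - 1) : ℤ) := by push_cast; omega
          omega
        have hdm := h.mem (v - 1) (by omega) (by omega)
        have hjm : 1 ≤ jn ∧ jn ≤ n := by omega
        have hinvj : W (W jn) = jn := h.invol jn hjm.1 hjm.2
        have hwjm := h.mem jn hjm.1 hjm.2
        refine ⟨W jn, ⟨hwjm.1, hwjm.2⟩, Or.inr ⟨?_, by rw [gpos_zero, hinvj]; exact hjn⟩⟩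
        rcases lt_trichotomy (W jn) jn with hD | hF | hA
        · -- jn ∈ D, b := W jn ∈ A
          have hbA : W jn < W (W jn) := by rw [hinvj]; exact hD
          rcases lt_trichotomy (W jn) (v - 1) with hc | hc | hc
          · have := h.nest _ _ hwjm.1 hwjm.2 (by omega) (by omega) hbA hV2.2 hc
            rw [hinvj] at this; omega
          · rw [← hc] at hjnub; rw [hinvj] at hjnub; omega
          · -- W jn ≥ v ; equality would give jn = W v
            rcases Nat.eq_or_lt_of_le (by omega : v ≤ W jn) with hc2 | hc2
            · exfalso
              have : W (W jn) = W v := by rw [hc2]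
              rw [hinvj] at this; omega
            · exact hc2
        · omega
        · omega
      · -- v ∈ R, t = 0 : j ∈ (W v, n + rho v)
        rw [gpos_T3 one_ne_zero hV1 hV2] at hj2
        have hvR : v ∈ Rset n W := mem_Rset_of_not h hv1 hv2 hV1 hV2
        have hρv : 1 ≤ rho n W v := rho_pos hvR
        have hρvL : rho n W v ≤ Lrun n W := rho_le_L v
        have hj2' : j < (n : ℤ) + rho n W v := by
          have : ((n + (1-1) * Lrun n W + rho n W v : ℕ) : ℤ)
              = (n : ℤ) + rho n W v := by push_cast; omega
          omega
        rcases le_or_gt j (n : ℤ) with hjn' | hjn'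
        · -- j within the original board
          have hjm : 1 ≤ jn ∧ jn ≤ n := by omega
          have hinvj : W (W jn) = jn := h.invol jn hjm.1 hjm.2
          have hwjm := h.mem jn hjm.1 hjm.2
          rcases lt_trichotomy (W jn) jn with hD | hF | hA
          · -- jn ∈ D with b := W jn
            rcases lt_trichotomy (W jn) v with hc | hc | hc
            · -- occupied by moved ball (W jn) + 1
              have hbA : W jn < W (W jn) := by rw [hinvj]; exact hD
              have hne : W jn + 1 ≠ v := by
                intro hcon
                exact hV2 ⟨by omega, by rw [show v - 1 = W jn by omega]; omega⟩
              refine ⟨W jn + 1, ⟨by omega, by omega⟩, Or.inl ⟨by omega, ?_⟩⟩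
              by_cases hD2 : W (W jn + 1) < W jn + 1
              · -- W jn + 1 ∈ D : show it is jn itself
                have hcm : 1 ≤ W (W jn + 1) ∧ W (W jn + 1) ≤ n :=
                  h.mem _ (by omega) (by omega)
                have hcinv : W (W (W jn + 1)) = W jn + 1 := h.invol _ (by omega) (by omega)
                have hcA : W (W jn + 1) < W (W (W jn + 1)) := by rw [hcinv]; exact hD2
                have hjeq : W jn + 1 = jn := by
                  rcases lt_trichotomy (W (W jn + 1)) (W jn) with hcc | hcc | hcc
                  · have := h.nest _ _ hcm.1 hcm.2 hwjm.1 hwjm.2 hcA hbA hcc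
                    rw [hinvj, hcinv] at this; omega
                  · rw [hcc] at hcinv; rw [hinvj] at hcinv; omega
                  · exfalso
                    have := h.nest _ _ hwjm.1 hwjm.2 hcm.1 hcm.2 hbA hcA hcc
                    rw [hcinv] at this; omega
                rw [gpos_T1 one_ne_zero hD2, hjeq]
                have : W jn = jn - 1 := by omega
                rw [this]
                have : (jn - 1 + 1 : ℕ) = jn := by omega
                rw [this]; exact hjn
              · rw [gpos_T2 one_ne_zero hD2 ⟨by omega, by simpa using hbA⟩]
                have : (W jn + 1 - 1 : ℕ) = W jn := by omega
                rw [this, hinvj]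
                have : ((jn + (1 - 1) : ℕ) : ℤ) = (jn : ℤ) := by push_cast; omega
                rw [this]; exact hjn
            · exfalso
              have : W (W jn) = W v := by rw [hc]
              rw [hinvj] at this
              omega
            · exact ⟨W jn, ⟨hwjm.1, hwjm.2⟩, Or.inr ⟨hc,
                by rw [gpos_zero, hinvj]; exact hjn⟩⟩
          · exact ⟨jn, ⟨hjm.1, hjm.2⟩, Or.inr ⟨by omega,
              by rw [gpos_zero, hF]; exact hjn⟩⟩
          · refine ⟨W jn, ⟨hwjm.1, hwjm.2⟩, Or.inr ⟨by omega,
              by rw [gpos_zero, hinvj]; exact hjn⟩⟩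
        · -- j in the tail : moved run ball of rank r = j - n
          have hrb : (1 : ℤ) ≤ j - n ∧ j - n < rho n W v := by omega
          set r := (j - n).toNat with hrdef
          have hr : (r : ℤ) = j - n := Int.toNat_of_nonneg (by omega)
          obtain ⟨u, huR, hur⟩ := rho_surj (n := n) (W := W) (r := r) (by omega)
            (by have : (rho n W v : ℤ) ≤ Lrun n W := by exact_mod_cast hρvL
                omega)
          have hum := (mem_Rset_iff.1 huR).1
          have hrlt : r < rho n W v := by omega
          have huv : u < v := lt_of_rho_lt huR hvR (by omega)
          refine ⟨u, hum, Or.inl ⟨huv, ?_⟩⟩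
          rw [gpos_T3 one_ne_zero (mem_Rset_iff.1 huR).2.1 (mem_Rset_iff.1 huR).2.2, hur]
          push_cast
          omega
  · -- t ≥ 1
    have ht : t ≠ 0 := by omega
    have ht1 : t + 1 ≠ 0 := by omega
    obtain ⟨s, rfl⟩ : ∃ s, t = s + 1 := ⟨t - 1, by omega⟩
    set K := s * Lrun n W with hKdef
    have hmul : (s + 1) * Lrun n W = K + Lrun n W := Nat.succ_mul _ _
    by_cases hV1 : W v < v
    · exfalso
      rw [gpos_T1 ht hV1] at hj1
      rw [gpos_T1 ht1 hV1] at hj2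
      have e1 : ((W v + (s + 1) : ℕ) : ℤ) = (W v : ℤ) + s + 1 := by push_cast; ring
      have e2 : ((W v + (s + 1 + 1) : ℕ) : ℤ) = (W v : ℤ) + s + 2 := by push_cast; ring
      omega
    · by_cases hV2 : 2 ≤ v ∧ v - 1 < W (v - 1)
      · exfalso
        rw [gpos_T2 ht hV1 hV2] at hj1
        rw [gpos_T2 ht1 hV1 hV2] at hj2
        have e1 : ((W (v-1) + (s + 1 - 1) : ℕ) : ℤ) = (W (v-1) : ℤ) + s := by
          push_cast [show s + 1 - 1 = s from rfl]; ring
        have e2 : ((W (v-1) + (s + 1 + 1 - 1) : ℕ) : ℤ) = (W (v-1) : ℤ) + s + 1 := by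
          push_cast [show s + 1 + 1 - 1 = s + 1 from rfl]; ring
        omega
      · rw [gpos_T3 ht hV1 hV2] at hj1
        rw [gpos_T3 ht1 hV1 hV2] at hj2
        have hvR : v ∈ Rset n W := mem_Rset_of_not h hv1 hv2 hV1 hV2
        have hρv : 1 ≤ rho n W v := rho_pos hvR
        have hρvL : rho n W v ≤ Lrun n W := rho_le_L v
        have e1 : ((n + (s + 1 - 1) * Lrun n W + rho n W v : ℕ) : ℤ)
            = (n : ℤ) + K + rho n W v := by
          push_cast [show s + 1 - 1 = s from rfl, hKdef]; ring
        have e2 : ((n + (s + 1 + 1 - 1) * Lrun n W + rho n W v : ℕ) : ℤ)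
            = (n : ℤ) + K + Lrun n W + rho n W v := by
          push_cast [show s + 1 + 1 - 1 = s + 1 from rfl, hmul]
          push_cast [hKdef]
          ring
        rw [e1] at hj1
        rw [e2] at hj2
        rcases le_or_gt j ((n : ℤ) + K + Lrun n W) with hcase | hcase
        · -- unmoved run ball of rank r = j - n - K
          set r := (j - n - K).toNat with hrdef
          have hr : (r : ℤ) = j - n - K := Int.toNat_of_nonneg (by omega)
          obtain ⟨u, huR, hur⟩ := rho_surj (n := n) (W := W) (r := r)
            (by omega) (by omega)
          have hum := (mem_Rset_iff.1 huR).1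
          have huv : v < u := lt_of_rho_lt hvR huR (by omega)
          refine ⟨u, hum, Or.inr ⟨huv, ?_⟩⟩
          rw [gpos_T3 ht (mem_Rset_iff.1 huR).2.1 (mem_Rset_iff.1 huR).2.2, hur]
          rw [show ((n + (s + 1 - 1) * Lrun n W + r : ℕ) : ℤ)
            = (n : ℤ) + K + r by push_cast [show s + 1 - 1 = s from rfl, hKdef]; ring]
          omega
        · -- moved run ball of rank r = j - n - K - L
          set r := (j - n - K - Lrun n W).toNat with hrdef
          have hr : (r : ℤ) = j - n - K - Lrun n W := Int.toNat_of_nonneg (by omega)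
          obtain ⟨u, huR, hur⟩ := rho_surj (n := n) (W := W) (r := r)
            (by omega) (by omega)
          have hum := (mem_Rset_iff.1 huR).1
          have huv : u < v := lt_of_rho_lt huR hvR (by omega)
          refine ⟨u, hum, Or.inl ⟨huv, ?_⟩⟩
          rw [gpos_T3 ht1 (mem_Rset_iff.1 huR).2.1 (mem_Rset_iff.1 huR).2.2, hur]
          rw [show ((n + (s + 1 + 1 - 1) * Lrun n W + r : ℕ) : ℤ)
            = (n : ℤ) + K + Lrun n W + r by
              push_cast [show s + 1 + 1 - 1 = s + 1 from rfl, hmul]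
              push_cast [hKdef]; ring]
          omega


section Nbr
variable {t u v : ℕ}

theorem nbr_right_T1 (h : ND n W) (ht : t ≠ 0) (hu1 : 1 ≤ u) (hu2 : u ≤ n)
    (hv1 : 1 ≤ v) (hv2 : v ≤ n) (hv : W v < v)
    (he : gpos n W t u = gpos n W t v + 1) : u < v := by
  have hn : 1 ≤ n := by omega
  have hL : 1 ≤ Lrun n W := Lrun_pos h hn
  obtain ⟨s, rfl⟩ : ∃ s, t = s + 1 := ⟨t - 1, by omega⟩
  set K := s * Lrun n W with hKdef
  have hK : s ≤ K := by rw [hKdef]; exact Nat.le_mul_of_pos_right s (by omega)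
  rw [gpos_T1 ht hv] at he
  have haA : W v < W (W v) := by rw [h.invol v hv1 hv2]; exact hv
  have ham := h.mem v hv1 hv2
  have hWa : W (W v) = v := h.invol v hv1 hv2
  by_cases hU1 : W u < u
  · rw [gpos_T1 ht hU1] at he
    have he' : W u = W v + 1 := by
      have : (W u + (s+1) : ℕ) = (W v + (s+1) + 1 : ℕ) := by exact_mod_cast he
      omega
    have hbA : W u < W (W u) := by rw [h.invol u hu1 hu2]; exact hU1
    have hbm := h.mem u hu1 hu2
    have := h.nest (W v) (W u) ham.1 ham.2 hbm.1 hbm.2 haA hbA (by omega)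
    rw [hWa, h.invol u hu1 hu2] at this
    omega
  · by_cases hU2 : 2 ≤ u ∧ u - 1 < W (u - 1)
    · rw [gpos_T2 ht hU1 hU2] at he
      have he' : W (u - 1) = W v + 2 := by
        have : (W (u-1) + (s+1-1) : ℕ) = (W v + (s+1) + 1 : ℕ) := by exact_mod_cast he
        omega
      have hbm : 1 ≤ u - 1 ∧ u - 1 ≤ n := by omega
      rcases lt_trichotomy (u - 1) (W v) with hc | hc | hc
      · have := h.nest _ _ hbm.1 hbm.2 ham.1 ham.2 hU2.2 haA hc
        rw [hWa] at this; omega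
      · have hWu1 : W (u - 1) = v := by rw [hc, hWa]
        omega
      · have := h.nest _ _ ham.1 ham.2 hbm.1 hbm.2 haA hU2.2 hc
        omega
    · rw [gpos_T3 ht hU1 hU2] at he
      have huR := mem_Rset_of_not h hu1 hu2 hU1 hU2
      have hρ : 1 ≤ rho n W u := rho_pos huR
      have he' : (n + (s+1-1) * Lrun n W + rho n W u : ℕ) = W v + (s+1) + 1 := by
        exact_mod_cast he
      rw [show s + 1 - 1 = s from rfl, ← hKdef] at he'
      have hr1 : rho n W u = 1 := by omega
      have := eq_one_of_rho_eq_one h huR hr1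
      omega

theorem nbr_right_T2 (h : ND n W) (ht : t ≠ 0) (hu1 : 1 ≤ u) (hu2 : u ≤ n)
    (hv1 : 1 ≤ v) (hv2 : v ≤ n) (hva : ¬ W v < v) (hvb : 2 ≤ v ∧ v - 1 < W (v - 1))
    (he : gpos n W t u = gpos n W t v + 1) : u < v := by
  have hn : 1 ≤ n := by omega
  have hL : 1 ≤ Lrun n W := Lrun_pos h hn
  obtain ⟨s, rfl⟩ : ∃ s, t = s + 1 := ⟨t - 1, by omega⟩
  set K := s * Lrun n W with hKdef
  have hK : s ≤ K := by rw [hKdef]; exact Nat.le_mul_of_pos_right s (by omega)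
  rw [gpos_T2 ht hva hvb] at he
  have ham : 1 ≤ v - 1 ∧ v - 1 ≤ n := by omega
  have hdm := h.mem (v-1) ham.1 ham.2
  have hWd : W (W (v - 1)) = v - 1 := h.invol (v-1) ham.1 ham.2
  by_cases hU1 : W u < u
  · rw [gpos_T1 ht hU1] at he
    have he' : W u = W (v - 1) := by
      have : (W u + (s+1) : ℕ) = (W (v-1) + (s+1-1) + 1 : ℕ) := by exact_mod_cast he
      omega
    have hu' : u = v - 1 := h.winj hu1 hu2 ham.1 ham.2 he'
    omega
  · by_cases hU2 : 2 ≤ u ∧ u - 1 < W (u - 1)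
    · rw [gpos_T2 ht hU1 hU2] at he
      have he' : W (u - 1) = W (v - 1) + 1 := by
        have : (W (u-1) + (s+1-1) : ℕ) = (W (v-1) + (s+1-1) + 1 : ℕ) := by exact_mod_cast he
        omega
      have hbm : 1 ≤ u - 1 ∧ u - 1 ≤ n := by omega
      rcases lt_trichotomy (u - 1) (v - 1) with hc | hc | hc
      · omega
      · rw [hc] at he'; omega
      · have := h.nest _ _ ham.1 ham.2 hbm.1 hbm.2 hvb.2 hU2.2 hc
        omega
    · rw [gpos_T3 ht hU1 hU2] at he
      have huR := mem_Rset_of_not h hu1 hu2 hU1 hU2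
      have hρ : 1 ≤ rho n W u := rho_pos huR
      have he' : (n + (s+1-1) * Lrun n W + rho n W u : ℕ)
          = W (v-1) + (s+1-1) + 1 := by exact_mod_cast he
      rw [show s + 1 - 1 = s from rfl, ← hKdef] at he'
      have hr1 : rho n W u = 1 := by omega
      have := eq_one_of_rho_eq_one h huR hr1
      omega

theorem nbr_left_T1 (h : ND n W) (ht : t ≠ 0) (hu1 : 1 ≤ u) (hu2 : u ≤ n)
    (hv1 : 1 ≤ v) (hv2 : v ≤ n) (hv : W v < v)
    (he : gpos n W t u = gpos n W t v - 1) : v < u := by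
  have hn : 1 ≤ n := by omega
  have hL : 1 ≤ Lrun n W := Lrun_pos h hn
  obtain ⟨s, rfl⟩ : ∃ s, t = s + 1 := ⟨t - 1, by omega⟩
  set K := s * Lrun n W with hKdef
  have hK : s ≤ K := by rw [hKdef]; exact Nat.le_mul_of_pos_right s (by omega)
  rw [gpos_T1 ht hv] at he
  have haA : W v < W (W v) := by rw [h.invol v hv1 hv2]; exact hv
  have ham := h.mem v hv1 hv2
  have hWa : W (W v) = v := h.invol v hv1 hv2
  by_cases hU1 : W u < u
  · rw [gpos_T1 ht hU1] at he
    have he' : W u + 1 = W v := by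
      have : ((W u + (s+1) : ℕ) : ℤ) = ((W v + (s+1) : ℕ) : ℤ) - 1 := he
      have : (W u + (s+1) : ℕ) + 1 = (W v + (s+1) : ℕ) := by exact_mod_cast
        (by omega : ((W u + (s+1) : ℕ) : ℤ) + 1 = ((W v + (s+1) : ℕ) : ℤ))
      omega
    have hbA : W u < W (W u) := by rw [h.invol u hu1 hu2]; exact hU1
    have hbm := h.mem u hu1 hu2
    have := h.nest (W u) (W v) hbm.1 hbm.2 ham.1 ham.2 hbA haA (by omega)
    rw [hWa, h.invol u hu1 hu2] at this
    omega
  · by_cases hU2 : 2 ≤ u ∧ u - 1 < W (u - 1)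
    · rw [gpos_T2 ht hU1 hU2] at he
      exfalso
      have he' : W (u - 1) = W v := by
        have : ((W (u-1) + (s+1-1) : ℕ) : ℤ) + 1 = ((W v + (s+1) : ℕ) : ℤ) := by omega
        have : (W (u-1) + s : ℕ) + 1 = (W v + (s+1) : ℕ) := by exact_mod_cast this
        omega
      have hu' : u - 1 = v := h.winj (by omega) (by omega) hv1 hv2 he'
      rw [hu'] at hU2
      omega
    · rw [gpos_T3 ht hU1 hU2] at he
      exfalso
      have huR := mem_Rset_of_not h hu1 hu2 hU1 hU2
      have hρ : 1 ≤ rho n W u := rho_pos huR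
      have he' : ((n + (s+1-1) * Lrun n W + rho n W u : ℕ) : ℤ) + 1
          = ((W v + (s+1) : ℕ) : ℤ) := by omega
      have he'' : (n + (s+1-1) * Lrun n W + rho n W u : ℕ) + 1 = (W v + (s+1) : ℕ) := by
        exact_mod_cast he'
      rw [show s + 1 - 1 = s from rfl, ← hKdef] at he''
      omega

theorem nbr_left_T2 (h : ND n W) (ht : t ≠ 0) (hu1 : 1 ≤ u) (hu2 : u ≤ n)
    (hv1 : 1 ≤ v) (hv2 : v ≤ n) (hva : ¬ W v < v) (hvb : 2 ≤ v ∧ v - 1 < W (v - 1))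
    (he : gpos n W t u = gpos n W t v - 1) : v < u := by
  have hn : 1 ≤ n := by omega
  have hL : 1 ≤ Lrun n W := Lrun_pos h hn
  obtain ⟨s, rfl⟩ : ∃ s, t = s + 1 := ⟨t - 1, by omega⟩
  set K := s * Lrun n W with hKdef
  have hK : s ≤ K := by rw [hKdef]; exact Nat.le_mul_of_pos_right s (by omega)
  rw [gpos_T2 ht hva hvb] at he
  have ham : 1 ≤ v - 1 ∧ v - 1 ≤ n := by omega
  have hdm := h.mem (v-1) ham.1 ham.2
  have hWd : W (W (v - 1)) = v - 1 := h.invol (v-1) ham.1 ham.2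
  have hda : v - 1 < W (v - 1) := hvb.2
  by_cases hU1 : W u < u
  · rw [gpos_T1 ht hU1] at he
    -- W u = W (v-1) - 2
    have he' : W u + 2 = W (v - 1) := by
      have h1 : ((W u + (s+1) : ℕ) : ℤ) + 1 = ((W (v-1) + (s+1-1) : ℕ) : ℤ) := by omega
      have h2 : (W u + (s+1) : ℕ) + 1 = (W (v-1) + (s+1-1) : ℕ) := by exact_mod_cast h1
      omega
    have hbA : W u < W (W u) := by rw [h.invol u hu1 hu2]; exact hU1
    have hbm := h.mem u hu1 hu2
    have hWb : W (W u) = u := h.invol u hu1 hu2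
    rcases lt_trichotomy (W u) (v - 1) with hc | hc | hc
    · have := h.nest _ _ hbm.1 hbm.2 ham.1 ham.2 hbA hda hc
      rw [hWb] at this
      omega
    · -- W u = v - 1 : u = W (v-1) = d, v = a + 1 ≤ d - 1 < d = u
      have : u = W (v - 1) := by rw [← hc, hWb]
      omega
    · have := h.nest _ _ ham.1 ham.2 hbm.1 hbm.2 hda hbA hc
      rw [hWb] at this
      -- W u < W (v-1) i.e. u ... this : W (W u) = u < W (v-1)? no:
      -- nest gives W (W u) < W (v - 1)? recheck: nest (v-1) (W u) : W (W u) < W (v-1)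
      -- u < W (v-1) = W u + 2 so u ≤ W u + 1, also W u < u so u = W u + 1
      -- then v = ... v - 1 < W u (hc) so v ≤ W u < u
      omega
  · by_cases hU2 : 2 ≤ u ∧ u - 1 < W (u - 1)
    · rw [gpos_T2 ht hU1 hU2] at he
      have he' : W (u - 1) + 1 = W (v - 1) := by
        have h1 : ((W (u-1) + (s+1-1) : ℕ) : ℤ) + 1 = ((W (v-1) + (s+1-1) : ℕ) : ℤ) := by
          omega
        have h2 : (W (u-1) + (s+1-1) : ℕ) + 1 = (W (v-1) + (s+1-1) : ℕ) := by
          exact_mod_cast h1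
        omega
      have hbm : 1 ≤ u - 1 ∧ u - 1 ≤ n := by omega
      rcases lt_trichotomy (u - 1) (v - 1) with hc | hc | hc
      · have := h.nest _ _ hbm.1 hbm.2 ham.1 ham.2 hU2.2 hda hc
        omega
      · rw [hc] at he'; omega
      · omega
    · rw [gpos_T3 ht hU1 hU2] at he
      exfalso
      have huR := mem_Rset_of_not h hu1 hu2 hU1 hU2
      have hρ : 1 ≤ rho n W u := rho_pos huR
      have h1 : ((n + (s+1-1) * Lrun n W + rho n W u : ℕ) : ℤ) + 1
          = ((W (v-1) + (s+1-1) : ℕ) : ℤ) := by omega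
      have h2 : (n + (s+1-1) * Lrun n W + rho n W u : ℕ) + 1
          = (W (v-1) + (s+1-1) : ℕ) := by exact_mod_cast h1
      rw [show s + 1 - 1 = s from rfl, ← hKdef] at h2
      omega

/-- nobody sits just to the right of the run block -/
theorem no_ball_after_run (h : ND n W) (ht : t ≠ 0) (hu1 : 1 ≤ u) (hu2 : u ≤ n) :
    gpos n W t u ≠ ((n + (t - 1) * Lrun n W + Lrun n W + 1 : ℕ) : ℤ) := by
  intro he
  have hn : 1 ≤ n := by omega
  have hL : 1 ≤ Lrun n W := Lrun_pos h hn
  obtain ⟨s, rfl⟩ : ∃ s, t = s + 1 := ⟨t - 1, by omega⟩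
  set K := s * Lrun n W with hKdef
  have hK : s ≤ K := by rw [hKdef]; exact Nat.le_mul_of_pos_right s (by omega)
  rw [show s + 1 - 1 = s from rfl, ← hKdef] at he
  by_cases hU1 : W u < u
  · rw [gpos_T1 ht hU1] at he
    have he' : W u + (s+1) = n + K + Lrun n W + 1 := by exact_mod_cast he
    omega
  · by_cases hU2 : 2 ≤ u ∧ u - 1 < W (u - 1)
    · rw [gpos_T2 ht hU1 hU2] at he
      have hdm := h.mem (u-1) (by omega) (by omega)
      have he' : W (u-1) + (s+1-1) = n + K + Lrun n W + 1 := by exact_mod_cast he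
      rw [show s + 1 - 1 = s from rfl] at he'
      omega
    · rw [gpos_T3 ht hU1 hU2] at he
      have hρ : rho n W u ≤ Lrun n W := rho_le_L u
      have he' : n + (s+1-1) * Lrun n W + rho n W u = n + K + Lrun n W + 1 := by
        exact_mod_cast he
      rw [show s + 1 - 1 = s from rfl, ← hKdef] at he'
      omega

end Nbr


noncomputable def zpos (n : ℕ) (W : ℕ → ℕ) (t k : ℕ) : ℕ → ℤ := fun v =>
  if v ≤ k then gpos n W (t + 1) v else gpos n W t v

theorem zpos_inj (h : ND n W) (t k : ℕ) : InjOn1n n (zpos n W t k) := by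
  intro u v hu1 hu2 hv1 hv2 he
  unfold zpos at he
  by_cases hu : u ≤ k <;> by_cases hv : v ≤ k
  · rw [if_pos hu, if_pos hv] at he
    exact g_inj h (t+1) u v hu1 hu2 hv1 hv2 he
  · rw [if_pos hu, if_neg hv] at he
    exact absurd he (g_nc h hv1 hv2 hu1 hu2 (by omega))
  · rw [if_neg hu, if_pos hv] at he
    exact absurd he.symm (g_nc h hu1 hu2 hv1 hv2 (by omega))
  · rw [if_neg hu, if_neg hv] at he
    exact g_inj h t u v hu1 hu2 hv1 hv2 he

theorem cfgOf_ext {p q : ℕ → ℤ} (hp : InjOn1n n p) (hq : InjOn1n n q)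
    (hpq : ∀ v, 1 ≤ v → v ≤ n → p v = q v) : cfgOf n p = cfgOf n q := by
  funext j
  by_cases hex : ∃ v, (1 ≤ v ∧ v ≤ n) ∧ p v = j
  · obtain ⟨v, ⟨h1, h2⟩, h3⟩ := hex
    rw [cfgOf_eq hp h1 h2 h3, cfgOf_eq hq h1 h2 (by rw [← hpq v h1 h2]; exact h3)]
  · rw [cfgOf_empty (fun v h1 h2 hv => hex ⟨v, ⟨h1, h2⟩, hv⟩),
      cfgOf_empty (fun v h1 h2 hv => hex ⟨v, ⟨h1, h2⟩, by rw [hpq v h1 h2]; exact hv⟩)]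

theorem move_step (h : ND n W) (t k : ℕ) (hk : k < n) :
    moveBall n (k + 1) (cfgOf n (zpos n W t k)) = cfgOf n (zpos n W t (k + 1)) := by
  have hk1 : 1 ≤ k + 1 := by omega
  have hk2 : k + 1 ≤ n := by omega
  have hzk : zpos n W t k (k + 1) = gpos n W t (k + 1) := by
    unfold zpos; rw [if_neg (by omega)]
  have hYp : cfgOf n (zpos n W t k) (gpos n W t (k+1)) = k + 1 :=
    cfgOf_eq (zpos_inj h t k) hk1 hk2 hzk
  have hu : ∀ j, cfgOf n (zpos n W t k) j = k + 1 → j = gpos n W t (k+1) := by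
    intro j hj
    have hne : cfgOf n (zpos n W t k) j ≠ n + 1 := by omega
    have hspec := (cfgOf_spec hne).2
    rw [hj, hzk] at hspec
    exact hspec.symm
  have h1 : gpos n W t (k+1) < gpos n W (t+1) (k+1) := g_lt h hk1 hk2
  have h2 : cfgOf n (zpos n W t k) (gpos n W (t+1) (k+1)) = n + 1 := by
    apply cfgOf_empty
    intro v hv1 hv2 hzv
    unfold zpos at hzv
    by_cases hvk : v ≤ k
    · rw [if_pos hvk] at hzv
      have := g_inj h (t+1) v (k+1) hv1 hv2 hk1 hk2 hzv
      omega
    · rw [if_neg hvk] at hzv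
      rcases Nat.eq_or_lt_of_le (by omega : k + 1 ≤ v) with hc | hc
      · rw [← hc] at hzv
        omega
      · exact g_nc h hv1 hv2 hk1 hk2 hc hzv.symm
  have h3 : ∀ r, gpos n W t (k+1) < r → cfgOf n (zpos n W t k) r = n + 1 →
      gpos n W (t+1) (k+1) ≤ r := by
    intro r hpr hYr
    by_contra hlt
    obtain ⟨u, ⟨hu1, hu2⟩, hcase⟩ := g_mid h hk1 hk2 hpr (by omega)
    have hYru : cfgOf n (zpos n W t k) r = u := by
      rcases hcase with ⟨hlt', he'⟩ | ⟨hlt', he'⟩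
      · exact cfgOf_eq (zpos_inj h t k) hu1 hu2
          (by unfold zpos; rw [if_pos (by omega)]; exact he')
      · exact cfgOf_eq (zpos_inj h t k) hu1 hu2
          (by unfold zpos; rw [if_neg (by omega)]; exact he')
    omega
  rw [moveBall_eq hYp hu h1 h2 h3]
  funext j
  by_cases hjq : j = gpos n W (t+1) (k+1)
  · rw [if_pos hjq]
    subst hjq
    exact (cfgOf_eq (zpos_inj h t (k+1)) hk1 hk2
      (by unfold zpos; rw [if_pos le_rfl])).symm
  · rw [if_neg hjq]
    by_cases hjp : j = gpos n W t (k+1)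
    · rw [if_pos hjp]
      subst hjp
      symm
      apply cfgOf_empty
      intro v hv1 hv2 hzv
      unfold zpos at hzv
      by_cases hvk : v ≤ k + 1
      · rw [if_pos hvk] at hzv
        rcases Nat.eq_or_lt_of_le hvk with hc | hc
        · rw [hc] at hzv
          omega
        · exact g_nc h hk1 hk2 hv1 hv2 (by omega) hzv
      · rw [if_neg hvk] at hzv
        have := g_inj h t v (k+1) hv1 hv2 hk1 hk2 hzv
        omega
    · rw [if_neg hjp]
      by_cases hex : ∃ v, (1 ≤ v ∧ v ≤ n) ∧ zpos n W t k v = j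
      · obtain ⟨v, ⟨hv1, hv2⟩, h3'⟩ := hex
        have hvk1 : v ≠ k + 1 := by
          intro hc
          subst hc
          rw [hzk] at h3'
          exact hjp h3'.symm
        rw [cfgOf_eq (zpos_inj h t k) hv1 hv2 h3']
        symm
        apply cfgOf_eq (zpos_inj h t (k+1)) hv1 hv2
        unfold zpos at h3' ⊢
        by_cases hvk : v ≤ k
        · rw [if_pos hvk] at h3'
          rw [if_pos (by omega)]
          exact h3'
        · rw [if_neg hvk] at h3'
          rw [if_neg (by omega)]
          exact h3'
      · rw [cfgOf_empty (fun v h1' h2' hv => hex ⟨v, ⟨h1', h2'⟩, hv⟩)]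
        symm
        apply cfgOf_empty
        intro v hv1 hv2 hzv
        unfold zpos at hzv
        apply hex
        refine ⟨v, ⟨hv1, hv2⟩, ?_⟩
        unfold zpos
        by_cases hvk : v ≤ k + 1
        · rw [if_pos hvk] at hzv
          rcases Nat.eq_or_lt_of_le hvk with hc | hc
          · exfalso
            rw [hc] at hzv
            exact hjq hzv.symm
          · rw [if_pos (by omega)]
            exact hzv
        · rw [if_neg hvk] at hzv
          rw [if_neg (by omega)]
          exact hzv

theorem bbmove_cfg (h : ND n W) (t : ℕ) :
    BBMove n (cfgOf n (gpos n W t)) = cfgOf n (gpos n W (t + 1)) := by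
  have h0 : cfgOf n (gpos n W t) = cfgOf n (zpos n W t 0) :=
    cfgOf_ext (g_inj h t) (zpos_inj h t 0)
      (fun v hv1 _ => by unfold zpos; rw [if_neg (by omega)])
  have hend : cfgOf n (gpos n W (t + 1)) = cfgOf n (zpos n W t n) :=
    cfgOf_ext (g_inj h (t+1)) (zpos_inj h t n)
      (fun v _ hv2 => by unfold zpos; rw [if_pos hv2])
  rw [h0, hend]
  exact bbmove_foldl (fun k => cfgOf n (zpos n W t k)) (fun k hk => move_step h t k hk)

theorem BB_cfg (h : ND n W) (t : ℕ) :
    BB n t (cfgOf n (gpos n W 1)) = cfgOf n (gpos n W (t + 1)) := by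
  induction t with
  | zero => rfl
  | succ t ih =>
    show (BBMove n)^[t + 1] _ = _
    rw [Function.iterate_succ_apply' (BBMove n) t]
    show BBMove n (BB n t (cfgOf n (gpos n W 1))) = _
    rw [ih]
    exact bbmove_cfg h (t + 1)


section Steady

theorem single_isrun (h : ND n W) {t v : ℕ} (ht : t ≠ 0) (hv1 : 1 ≤ v) (hv2 : v ≤ n)
    (hsing : ¬ (¬ W v < v ∧ ¬ (2 ≤ v ∧ v - 1 < W (v - 1)))) :
    IsRun n (cfgOf n (gpos n W t)) (gpos n W t v) (gpos n W t v) := by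
  have hXv : cfgOf n (gpos n W t) (gpos n W t v) = v := cfgOf_eq (g_inj h t) hv1 hv2 rfl
  refine ⟨le_rfl, ?_, ?_, ?_, ?_⟩
  · intro i h1 h2
    have : i = gpos n W t v := le_antisymm h2 h1
    subst this
    rw [hXv]
    exact ⟨hv1, hv2⟩
  · intro i h1 h2
    omega
  · rw [hXv]
    by_cases hex : ∃ u, (1 ≤ u ∧ u ≤ n) ∧ gpos n W t u = gpos n W t v - 1
    · obtain ⟨u, ⟨hu1, hu2⟩, hgu⟩ := hex
      rw [cfgOf_eq (g_inj h t) hu1 hu2 hgu]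
      by_cases hT1 : W v < v
      · exact nbr_left_T1 h ht hu1 hu2 hv1 hv2 hT1 hgu
      · have hT2 : 2 ≤ v ∧ v - 1 < W (v - 1) := by tauto
        exact nbr_left_T2 h ht hu1 hu2 hv1 hv2 hT1 hT2 hgu
    · rw [cfgOf_empty (fun u h1 h2 hgu => hex ⟨u, ⟨h1, h2⟩, hgu⟩)]
      omega
  · rw [hXv]
    by_cases hex : ∃ u, (1 ≤ u ∧ u ≤ n) ∧ gpos n W t u = gpos n W t v + 1
    · obtain ⟨u, ⟨hu1, hu2⟩, hgu⟩ := hex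
      right
      rw [cfgOf_eq (g_inj h t) hu1 hu2 hgu]
      by_cases hT1 : W v < v
      · exact nbr_right_T1 h ht hu1 hu2 hv1 hv2 hT1 hgu
      · have hT2 : 2 ≤ v ∧ v - 1 < W (v - 1) := by tauto
        exact nbr_right_T2 h ht hu1 hu2 hv1 hv2 hT1 hT2 hgu
    · left
      exact cfgOf_empty (fun u h1 h2 hgu => hex ⟨u, ⟨h1, h2⟩, hgu⟩)

theorem single_shift {s v : ℕ} (hv1 : 1 ≤ v)
    (hsing : ¬ (¬ W v < v ∧ ¬ (2 ≤ v ∧ v - 1 < W (v - 1)))) :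
    gpos n W (s + 1) v = gpos n W 1 v + s := by
  by_cases hT1 : W v < v
  · rw [gpos_T1 (by omega) hT1, gpos_T1 one_ne_zero hT1]
    push_cast
    ring
  · have hT2 : 2 ≤ v ∧ v - 1 < W (v - 1) := by tauto
    rw [gpos_T2 (by omega) hT1 hT2, gpos_T2 one_ne_zero hT1 hT2]
    rw [show s + 1 - 1 = s from rfl, show 1 - 1 = 0 from rfl]
    push_cast
    ring

theorem run_ball_at (h : ND n W) {t r : ℕ} (ht : t ≠ 0) (hr1 : 1 ≤ r)
    (hr2 : r ≤ Lrun n W) :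
    ∃ u, (1 ≤ u ∧ u ≤ n) ∧ u ∈ Rset n W ∧ rho n W u = r ∧
      gpos n W t u = ((n + (t - 1) * Lrun n W + r : ℕ) : ℤ) ∧
      cfgOf n (gpos n W t) ((n + (t - 1) * Lrun n W + r : ℕ) : ℤ) = u := by
  obtain ⟨u, huR, hur⟩ := rho_surj hr1 hr2
  have hum := (mem_Rset_iff.1 huR).1
  have hg : gpos n W t u = ((n + (t - 1) * Lrun n W + r : ℕ) : ℤ) := by
    rw [gpos_T3 ht (mem_Rset_iff.1 huR).2.1 (mem_Rset_iff.1 huR).2.2, hur]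
  exact ⟨u, hum, huR, hur, hg, cfgOf_eq (g_inj h t) hum.1 hum.2 hg⟩

theorem run_isrun (h : ND n W) {t : ℕ} (ht : t ≠ 0) (hn : 1 ≤ n) :
    IsRun n (cfgOf n (gpos n W t)) ((n + (t - 1) * Lrun n W + 1 : ℕ) : ℤ)
      ((n + (t - 1) * Lrun n W + Lrun n W : ℕ) : ℤ) := by
  have hL : 1 ≤ Lrun n W := Lrun_pos h hn
  set M := (t - 1) * Lrun n W with hMdef
  refine ⟨by push_cast; omega, ?_, ?_, ?_, ?_⟩
  · intro i h1 h2
    set r := (i - n - M).toNat with hrdef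
    have hri : ((n + M + r : ℕ) : ℤ) = i := by push_cast; omega
    have hr1 : 1 ≤ r := by omega
    have hr2 : r ≤ Lrun n W := by omega
    obtain ⟨u, hum, _, _, _, hXu⟩ := run_ball_at h ht hr1 hr2
    rw [hri] at hXu
    rw [hXu]
    exact hum
  · intro i h1 h2
    set r := (i - n - M).toNat with hrdef
    have hri : ((n + M + r : ℕ) : ℤ) = i := by push_cast; omega
    have hri' : ((n + M + (r+1) : ℕ) : ℤ) = i + 1 := by push_cast; omega
    have hr1 : 1 ≤ r := by omega
    have hr2 : r ≤ Lrun n W := by omega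
    have hr2' : r + 1 ≤ Lrun n W := by omega
    obtain ⟨u, hum, huR, hur, _, hXu⟩ := run_ball_at h ht hr1 hr2
    obtain ⟨u', hum', huR', hur', _, hXu'⟩ := run_ball_at h ht (by omega : 1 ≤ r + 1) hr2'
    rw [hri] at hXu
    rw [hri'] at hXu'
    rw [hXu, hXu']
    exact lt_of_rho_lt huR huR' (by omega)
  · -- left edge : value at block start is 1
    have h1R : 1 ∈ Rset n W := one_mem_Rset h hn
    have hg1 : gpos n W t 1 = ((n + M + 1 : ℕ) : ℤ) := by
      rw [gpos_T3 ht (mem_Rset_iff.1 h1R).2.1 (mem_Rset_iff.1 h1R).2.2, rho_one h hn]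
    have hXa : cfgOf n (gpos n W t) ((n + M + 1 : ℕ) : ℤ) = 1 :=
      cfgOf_eq (g_inj h t) le_rfl hn hg1
    rw [hXa]
    by_cases hex : ∃ u, (1 ≤ u ∧ u ≤ n) ∧ gpos n W t u = ((n + M + 1 : ℕ) : ℤ) - 1
    · obtain ⟨u, ⟨hu1, hu2⟩, hgu⟩ := hex
      rw [cfgOf_eq (g_inj h t) hu1 hu2 hgu]
      rcases Nat.eq_or_lt_of_le hu1 with hc | hc
      · exfalso
        rw [← hc] at hgu
        rw [hg1] at hgu
        omega
      · omega
    · rw [cfgOf_empty (fun u h1 h2 hgu => hex ⟨u, ⟨h1, h2⟩, hgu⟩)]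
      omega
  · left
    have : ((n + M + Lrun n W : ℕ) : ℤ) + 1 = ((n + M + Lrun n W + 1 : ℕ) : ℤ) := by
      push_cast; ring
    rw [this]
    exact cfgOf_empty (fun u h1 h2 hgu => (no_ball_after_run h ht h1 h2) hgu)

theorem steady (h : ND n W) (hn : 1 ≤ n) :
    SteadyState n (cfgOf n (gpos n W 1)) := by
  intro j hj1 hj2
  have hL : 1 ≤ Lrun n W := Lrun_pos h hn
  have hne : cfgOf n (gpos n W 1) j ≠ n + 1 := by omega
  obtain ⟨⟨hv1, hv2⟩, hgv⟩ := cfgOf_spec hne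
  set v := cfgOf n (gpos n W 1) j with hvdef
  by_cases hrun : ¬ W v < v ∧ ¬ (2 ≤ v ∧ v - 1 < W (v - 1))
  · -- run ball
    have hvR : v ∈ Rset n W := mem_Rset_of_not h hv1 hv2 hrun.1 hrun.2
    have hρ1 : 1 ≤ rho n W v := rho_pos hvR
    have hρ2 : rho n W v ≤ Lrun n W := rho_le_L v
    have hgv' : gpos n W 1 v = ((n + 0 * Lrun n W + rho n W v : ℕ) : ℤ) :=
      gpos_T3 one_ne_zero hrun.1 hrun.2
    have hj : j = ((n + 0 * Lrun n W + rho n W v : ℕ) : ℤ) := by rw [← hgv, hgv']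
    refine ⟨((n + 0 * Lrun n W + 1 : ℕ) : ℤ), ((n + 0 * Lrun n W + Lrun n W : ℕ) : ℤ),
      by push_cast; omega, by push_cast; omega, run_isrun h one_ne_zero hn, ?_⟩
    intro t
    refine ⟨((n + t * Lrun n W + 1 : ℕ) : ℤ), ?_, ?_⟩
    · rw [BB_cfg h t]
      have hrw : ((n + t * Lrun n W + 1 : ℕ) : ℤ) +
          (((n + 0 * Lrun n W + Lrun n W : ℕ) : ℤ) - ((n + 0 * Lrun n W + 1 : ℕ) : ℤ))
          = ((n + (t + 1 - 1) * Lrun n W + Lrun n W : ℕ) : ℤ) := by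
        push_cast [show t + 1 - 1 = t from rfl]
        ring
      rw [hrw]
      have := run_isrun h (t := t + 1) (by omega) hn
      rwa [show t + 1 - 1 = t from rfl] at this
    · intro i hi0 hiL
      rw [BB_cfg h t]
      set r := i.toNat + 1 with hrdef
      have hr1 : 1 ≤ r := by omega
      have hr2 : r ≤ Lrun n W := by
        have : ((n + 0 * Lrun n W + Lrun n W : ℕ) : ℤ) - ((n + 0 * Lrun n W + 1 : ℕ) : ℤ)
            = (Lrun n W : ℤ) - 1 := by push_cast; ring
        omega
      obtain ⟨u, hum, huR, hur, _, hXu⟩ := run_ball_at h (t := t + 1) (by omega) hr1 hr2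
      obtain ⟨u', hum', huR', hur', _, hXu'⟩ := run_ball_at h (t := 1) one_ne_zero hr1 hr2
      have he1 : ((n + (t + 1 - 1) * Lrun n W + r : ℕ) : ℤ)
          = ((n + t * Lrun n W + 1 : ℕ) : ℤ) + i := by
        push_cast [show t + 1 - 1 = t from rfl]
        omega
      have he2 : ((n + (1 - 1) * Lrun n W + r : ℕ) : ℤ)
          = ((n + 0 * Lrun n W + 1 : ℕ) : ℤ) + i := by
        push_cast [show (1:ℕ) - 1 = 0 from rfl]
        omega
      rw [he1] at hXu
      rw [he2] at hXu'
      rw [hXu, hXu']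
      exact rho_injR huR huR' (by omega)
  · -- single ball
    refine ⟨j, j, le_rfl, le_rfl, ?_, ?_⟩
    · have := single_isrun h one_ne_zero hv1 hv2 hrun
      rwa [hgv] at this
    · intro t
      refine ⟨j + t, ?_, ?_⟩
      · have hrun' := single_isrun h (t := t + 1) (by omega) hv1 hv2 hrun
        have hsh : gpos n W (t + 1) v = j + t := by
          rw [single_shift hv1 hrun, hgv]
        rw [BB_cfg h t]
        rw [hsh] at hrun'
        simpa using hrun'
      · intro i hi0 hi1
        have : i = 0 := by omega
        subst this
        have hsh : gpos n W (t + 1) v = j + t := by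
          rw [single_shift hv1 hrun, hgv]
        rw [BB_cfg h t, add_zero, add_zero, ← hsh, ← hvdef]
        exact cfgOf_eq (g_inj h (t+1)) hv1 hv2 rfl

end Steady

end
end NestedBBS
/-- Every nested involution has steady-state time at most `1`:
`BB^1(w)` is in steady state. -/
theorem nested_involution_steady_state_time_le_one (n : ℕ) (w : Equiv.Perm (Fin n))
    (hinv : w * w = 1) (hnest : Nested w) :
    SteadyState n (BB n 1 (configOfPerm n w)) := by
  rcases Nat.eq_zero_or_pos n with rfl | hn
  · -- n = 0 : no balls at all
    intro j hj1 hj2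
    exfalso
    have hBB : BB 0 1 (configOfPerm 0 w) = configOfPerm 0 w := by
      simp [BB, BBMove]
    rw [hBB] at hj1 hj2
    have hval : configOfPerm 0 w j = 1 := by
      simp only [configOfPerm]
      rw [dif_neg (by omega)]
    omega
  · have hww : ∀ x, w (w x) = x := by
      intro x
      have := congrArg (fun p : Equiv.Perm (Fin n) => p x) hinv
      simpa using this
    set W : ℕ → ℕ := fun v =>
      if hv : 1 ≤ v ∧ v ≤ n then ((w ⟨v - 1, by omega⟩ : Fin n) : ℕ) + 1 else v
      with hWdef
    have hWspec : ∀ v, 1 ≤ v → v ≤ n →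
        ∃ x : Fin n, (x : ℕ) = v - 1 ∧ W v = (w x : ℕ) + 1 := by
      intro v h1 h2
      refine ⟨⟨v - 1, by omega⟩, rfl, ?_⟩
      simp only [hWdef]
      rw [dif_pos ⟨h1, h2⟩]
    have hmem : ∀ v, 1 ≤ v → v ≤ n → 1 ≤ W v ∧ W v ≤ n := by
      intro v h1 h2
      obtain ⟨x, hx, hWx⟩ := hWspec v h1 h2
      have := (w x).isLt
      omega
    have hinvol : ∀ v, 1 ≤ v → v ≤ n → W (W v) = v := by
      intro v h1 h2
      obtain ⟨x, hx, hWx⟩ := hWspec v h1 h2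
      have hWm := hmem v h1 h2
      obtain ⟨y, hy, hWy⟩ := hWspec (W v) hWm.1 hWm.2
      have hyx : y = w x := by
        apply Fin.ext
        omega
      rw [hWy, hyx, hww]
      omega
    have hnd : NestedBBS.ND n W := by
      refine ⟨hmem, hinvol, ?_⟩
      intro u v hu1 hu2 hv1 hv2 hau hav huv
      obtain ⟨x, hx, hWx⟩ := hWspec u hu1 hu2
      obtain ⟨y, hy, hWy⟩ := hWspec v hv1 hv2
      have hkey := hnest x y (w x) (w y) ?_ ?_ rfl rfl ?_
      · rcases hkey with ⟨_, hdc⟩ | ⟨hba, _⟩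
        · rw [Fin.lt_def] at hdc
          omega
        · rw [Fin.lt_def] at hba
          omega
      · rw [Fin.lt_def]
        omega
      · rw [Fin.lt_def]
        omega
      · intro hcon
        have := congrArg Fin.val hcon
        omega
    have hcfg : configOfPerm n w = NestedBBS.cfgOf n (NestedBBS.gpos n W 0) := by
      funext j
      by_cases hj : 1 ≤ j ∧ j ≤ (n : ℤ)
      · have hjn1 : 1 ≤ j.toNat := by omega
        have hjn2 : j.toNat ≤ n := by omega
        obtain ⟨x, hx, hWx⟩ := hWspec j.toNat hjn1 hjn2
        have hWm := hmem j.toNat hjn1 hjn2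
        have hleft : configOfPerm n w j = W j.toNat := by
          simp only [configOfPerm]
          rw [dif_pos hj, hWx]
          have hxe : (⟨j.toNat - 1, by omega⟩ : Fin n) = x := by
            apply Fin.ext
            simp only [Fin.val_mk]
            omega
          rw [hxe]
        have hg : NestedBBS.gpos n W 0 (W j.toNat) = j := by
          rw [NestedBBS.gpos_zero, hinvol j.toNat hjn1 hjn2]
          omega
        rw [hleft, NestedBBS.cfgOf_eq (NestedBBS.g_inj hnd 0) hWm.1 hWm.2 hg]
      · have hleft : configOfPerm n w j = n + 1 := by
          simp only [configOfPerm]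
          rw [dif_neg hj]
        rw [hleft]
        symm
        apply NestedBBS.cfgOf_empty
        intro v h1 h2 hgv
        rw [NestedBBS.gpos_zero] at hgv
        have := hmem v h1 h2
        omega
    have hBB1 : BB n 1 (configOfPerm n w) = NestedBBS.cfgOf n (NestedBBS.gpos n W 1) := by
      have h1 : BB n 1 (configOfPerm n w) = BBMove n (configOfPerm n w) := by
        simp [BB]
      rw [h1, hcfg]
      exact NestedBBS.bbmove_cfg hnd 0
    rw [hBB1]
    exact NestedBBS.steady hnd hn
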